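/- Fix α_1,…,α_p > 0 (p ≥ 1), β_2,…,β_q > 0, A_i ≥ 0, B_j ≥ 0 with 1 + ΣB_j − ΣA_i > 0, B_1 > 0, and fix z > 0. Then the function β₁ ↦ Γ(β₁) · Σ_{k=0}^∞ (∏_i Γ(α_i + kA_i)) / (Γ(β₁ + kB₁) ∏_{j≥2} Γ(β_j + kB_j)) · z^k / k! is log-convex on (0, ∞). -/

import Mathlib

set_option maxHeartbeats 1000000

open Real Filter Set

lemma aux_convex_log_diff (a c : ℝ) (ha : 0 ≤ a) (hc : 0 ≤ c) :
    ConvexOn ℝ (Set.Ioi (0:ℝ)) (fun b => Real.log (b + a + c) - Real.log (b + c)) := by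
  have hpos1 : ∀ x ∈ Set.Ioi (0:ℝ), 0 < x + a + c := fun x hx => by
    have : (0:ℝ) < x := hx; linarith
  have hpos2 : ∀ x ∈ Set.Ioi (0:ℝ), 0 < x + c := fun x hx => by
    have : (0:ℝ) < x := hx; linarith
  have hder : ∀ x ∈ Set.Ioi (0:ℝ),
      HasDerivAt (fun b => Real.log (b + a + c) - Real.log (b + c))
        ((x + a + c)⁻¹ - (x + c)⁻¹) x := by
    intro x hx
    have h1 : HasDerivAt (fun y : ℝ => y + a + c) 1 x := by
      simpa using ((hasDerivAt_id x).add_const a).add_const c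
    have h2 : HasDerivAt (fun y : ℝ => y + c) 1 x := by
      simpa using (hasDerivAt_id x).add_const c
    have := (h1.log (hpos1 x hx).ne').sub (h2.log (hpos2 x hx).ne')
    exact (by simpa [one_div] using this : HasDerivAt ((fun y => Real.log (y + a + c)) - fun y => Real.log (y + c)) ((x + a + c)⁻¹ - (x + c)⁻¹) x)
  apply convexOn_of_hasDerivWithinAt2_nonneg (f' := fun x => (x + a + c)⁻¹ - (x + c)⁻¹)
    (f'' := fun x => -1/((x+a+c)^2) - (-1/((x+c)^2))) (convex_Ioi 0)
  · intro x hx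
    exact (hder x hx).continuousAt.continuousWithinAt
  · intro x hx
    rw [interior_Ioi] at hx
    exact (hder x hx).hasDerivWithinAt
  · intro x hx
    rw [interior_Ioi] at hx
    have h1 : HasDerivAt (fun y : ℝ => y + a + c) 1 x := by
      simpa using ((hasDerivAt_id x).add_const a).add_const c
    have h2 : HasDerivAt (fun y : ℝ => y + c) 1 x := by
      simpa using (hasDerivAt_id x).add_const c
    have d1 : HasDerivAt (fun y : ℝ => (y + a + c)⁻¹) (-1/((x+a+c)^2)) x := by
      exact (by simpa using h1.inv (hpos1 x hx).ne' : HasDerivAt (fun y : ℝ => y + a + c)⁻¹ (-1/((x+a+c)^2)) x)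
    have d2 : HasDerivAt (fun y : ℝ => (y + c)⁻¹) (-1/((x+c)^2)) x := by
      exact (by simpa using h2.inv (hpos2 x hx).ne' : HasDerivAt (fun y : ℝ => y + c)⁻¹ (-1/((x+c)^2)) x)
    exact (d1.sub d2).hasDerivWithinAt
  · intro x hx
    rw [interior_Ioi] at hx
    have h1 := hpos1 x hx
    have h2 := hpos2 x hx
    have key : ((x+a+c)^2)⁻¹ ≤ ((x+c)^2)⁻¹ := by
      apply inv_anti₀ (by positivity)
      nlinarith
    have e1 : -1/((x+a+c)^2) = -(((x+a+c)^2)⁻¹) := by ring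
    have e2 : -1/((x+c)^2) = -(((x+c)^2)⁻¹) := by ring
    rw [e1, e2]
    linarith

lemma aux_convexOn_sum {ι : Type*} (s : Finset ι) (D : Set ℝ) (hD : Convex ℝ D)
    (f : ι → ℝ → ℝ) (h : ∀ i ∈ s, ConvexOn ℝ D (f i)) :
    ConvexOn ℝ D (fun x => ∑ i ∈ s, f i x) := by
  classical
  induction s using Finset.induction_on with
  | empty => simpa using convexOn_const 0 hD
  | @insert a t hat ih =>
    simp only [Finset.sum_insert hat]
    exact (h a (Finset.mem_insert_self a t)).add
      (ih fun i hi => h i (Finset.mem_insert_of_mem hi))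

lemma log_GammaSeq_eq (s : ℝ) (hs : 0 < s) (n : ℕ) (hn : 1 ≤ n) :
    Real.log (Real.GammaSeq s n)
      = s * Real.log n + Real.log (n.factorial)
        - ∑ j ∈ Finset.range (n + 1), Real.log (s + j) := by
  have hn' : (0:ℝ) < n := by exact_mod_cast hn
  have hterm : ∀ j ∈ Finset.range (n+1), s + (j:ℝ) ≠ 0 := by
    intro j _
    have : (0:ℝ) ≤ j := Nat.cast_nonneg j
    positivity
  have hprod : (0:ℝ) < ∏ j ∈ Finset.range (n + 1), (s + j) := by
    apply Finset.prod_pos; intro j _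
    have : (0:ℝ) ≤ j := Nat.cast_nonneg j
    positivity
  rw [Real.GammaSeq, Real.log_div (by positivity) hprod.ne', Real.log_mul (by positivity)
    (by positivity), Real.log_rpow hn', Real.log_prod hterm]

/-- The key convexity lemma: `b ↦ log Γ(b) - log Γ(b + a)` is convex on `(0,∞)` for `a ≥ 0`. -/
lemma convexOn_log_Gamma_sub (a : ℝ) (ha : 0 ≤ a) :
    ConvexOn ℝ (Set.Ioi (0:ℝ))
      (fun b => Real.log (Real.Gamma b) - Real.log (Real.Gamma (b + a))) := by
  set F : ℕ → ℝ → ℝ := fun n b => -(a * Real.log n)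
      + ∑ j ∈ Finset.range (n+1), (Real.log (b + a + j) - Real.log (b + j)) with hF
  have hFconv : ∀ n, ConvexOn ℝ (Set.Ioi (0:ℝ)) (F n) := by
    intro n
    have := aux_convexOn_sum (Finset.range (n+1)) (Set.Ioi (0:ℝ)) (convex_Ioi 0)
      (fun j b => Real.log (b + a + j) - Real.log (b + j))
      (fun j _ => aux_convex_log_diff a j ha (Nat.cast_nonneg j))
    exact (convexOn_const (-(a * Real.log n)) (convex_Ioi 0)).add this
  have hlim : ∀ b ∈ Set.Ioi (0:ℝ), Tendsto (fun n => F n b) atTop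
      (nhds (Real.log (Real.Gamma b) - Real.log (Real.Gamma (b + a)))) := by
    intro b hb
    have hb' : (0:ℝ) < b := hb
    have hba : (0:ℝ) < b + a := by linarith
    have t1 : Tendsto (fun n => Real.log (Real.GammaSeq b n)) atTop
        (nhds (Real.log (Real.Gamma b))) :=
      ((Real.continuousAt_log (Real.Gamma_pos_of_pos hb').ne').tendsto).comp
        (Real.GammaSeq_tendsto_Gamma b)
    have t2 : Tendsto (fun n => Real.log (Real.GammaSeq (b+a) n)) atTop
        (nhds (Real.log (Real.Gamma (b+a)))) :=
      ((Real.continuousAt_log (Real.Gamma_pos_of_pos hba).ne').tendsto).comp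
        (Real.GammaSeq_tendsto_Gamma (b+a))
    have t3 := t1.sub t2
    apply t3.congr'
    filter_upwards [eventually_ge_atTop 1] with n hn
    rw [log_GammaSeq_eq b hb' n hn, log_GammaSeq_eq (b+a) hba n hn, hF]
    simp only [Finset.sum_sub_distrib]
    ring
  -- pointwise limit of convex functions is convex
  constructor
  · exact convex_Ioi 0
  · intro x hx y hy s t hs ht hst
    have hmem : s • x + t • y ∈ Set.Ioi (0:ℝ) := (convex_Ioi 0) hx hy hs ht hst
    refine le_of_tendsto_of_tendsto' (hlim _ hmem) (((hlim x hx).const_mul s).add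
      ((hlim y hy).const_mul t)) (fun n => ?_)
    exact (hFconv n).2 hx hy hs ht hst

lemma Gamma_frac_upper {y θ : ℝ} (hy : 0 < y) (h0 : 0 ≤ θ) (h1 : θ ≤ 1) :
    Real.Gamma (y + θ) ≤ Real.Gamma y * y ^ θ := by
  have hθ' : 0 ≤ 1 - θ := by linarith
  have hmem : y ∈ Set.Ioi (0:ℝ) := hy
  have hmem1 : y + 1 ∈ Set.Ioi (0:ℝ) := by simp only [Set.mem_Ioi]; linarith
  have h := Real.convexOn_log_Gamma.2 hmem hmem1 hθ' h0 (by ring)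
  simp only [smul_eq_mul, Function.comp_apply] at h
  have hcomb : (1 - θ) * y + θ * (y + 1) = y + θ := by ring
  rw [hcomb] at h
  have hΓ1 : Real.Gamma (y + 1) = y * Real.Gamma y := Real.Gamma_add_one hy.ne'
  have hΓy : 0 < Real.Gamma y := Real.Gamma_pos_of_pos hy
  have hlog : Real.log (Real.Gamma (y + θ)) ≤ Real.log (Real.Gamma y) + θ * Real.log y := by
    rw [hΓ1, Real.log_mul hy.ne' hΓy.ne'] at h
    nlinarith [h]
  calc Real.Gamma (y + θ) = Real.exp (Real.log (Real.Gamma (y + θ))) :=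
        (Real.exp_log (Real.Gamma_pos_of_pos (by linarith))).symm
    _ ≤ Real.exp (Real.log (Real.Gamma y) + θ * Real.log y) := Real.exp_le_exp.mpr hlog
    _ = Real.Gamma y * y ^ θ := by
        rw [Real.exp_add, Real.exp_log hΓy, Real.rpow_def_of_pos hy]
        ring_nf

lemma Gamma_frac_lower {y θ : ℝ} (hy : 1 ≤ y) (h0 : 0 ≤ θ) (h1 : θ ≤ 1) :
    Real.Gamma y * y ^ θ ≤ 2 * Real.Gamma (y + θ) := by
  have hy' : 0 < y := lt_of_lt_of_le one_pos hy
  have hyθ : 0 < y + θ := by linarith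
  have hθ' : 0 ≤ 1 - θ := by linarith
  have hmem : y + θ ∈ Set.Ioi (0:ℝ) := hyθ
  have hmem1 : y + θ + 1 ∈ Set.Ioi (0:ℝ) := by simp only [Set.mem_Ioi]; linarith
  have h := Real.convexOn_log_Gamma.2 hmem hmem1 h0 hθ' (by ring)
  simp only [smul_eq_mul, Function.comp_apply] at h
  have hcomb : θ * (y + θ) + (1 - θ) * (y + θ + 1) = y + 1 := by ring
  rw [hcomb] at h
  have hΓyθ : 0 < Real.Gamma (y + θ) := Real.Gamma_pos_of_pos hyθ
  have hΓy : 0 < Real.Gamma y := Real.Gamma_pos_of_pos hy'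
  have hΓ1 : Real.Gamma (y + θ + 1) = (y + θ) * Real.Gamma (y + θ) :=
    Real.Gamma_add_one hyθ.ne'
  have hΓ2 : Real.Gamma (y + 1) = y * Real.Gamma y := Real.Gamma_add_one hy'.ne'
  rw [hΓ1, hΓ2, Real.log_mul hy'.ne' hΓy.ne', Real.log_mul hyθ.ne' hΓyθ.ne'] at h
  -- h : log y + log Γ y ≤ θ * log Γ(y+θ) + (1-θ)*(log(y+θ) + log Γ(y+θ))
  have key : (1 - θ) * (Real.log (y + θ) - Real.log y) ≤ Real.log 2 := by
    have hle : Real.log (y + θ) - Real.log y ≤ Real.log 2 := by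
      rw [← Real.log_div hyθ.ne' hy'.ne']
      apply Real.log_le_log (by positivity)
      rw [div_le_iff₀ hy']
      nlinarith
    have hnn : 0 ≤ Real.log (y + θ) - Real.log y := by
      have := Real.log_le_log hy' (by linarith : y ≤ y + θ)
      linarith
    nlinarith [Real.log_nonneg (by norm_num : (1:ℝ) ≤ 2)]
  have hlog : Real.log (Real.Gamma y) + θ * Real.log y
      ≤ Real.log 2 + Real.log (Real.Gamma (y + θ)) := by nlinarith [h, key]
  calc Real.Gamma y * y ^ θ
      = Real.exp (Real.log (Real.Gamma y) + θ * Real.log y) := by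
        rw [Real.exp_add, Real.exp_log hΓy, Real.rpow_def_of_pos hy']; ring_nf
    _ ≤ Real.exp (Real.log 2 + Real.log (Real.Gamma (y + θ))) := Real.exp_le_exp.mpr hlog
    _ = 2 * Real.Gamma (y + θ) := by
        rw [Real.exp_add, Real.exp_log two_pos, Real.exp_log hΓyθ]

lemma Gamma_nat_upper (x : ℝ) (hx : 0 < x) (n : ℕ) :
    Real.Gamma (x + n) ≤ Real.Gamma x * (x + n) ^ n := by
  induction n with
  | zero => simp
  | succ n ih =>
    have hxn : 0 < x + n := by positivity
    have h1 : Real.Gamma (x + (n+1:ℕ)) = (x + n) * Real.Gamma (x + n) := by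
      push_cast
      rw [show x + ((n:ℝ)+1) = (x + n) + 1 by ring, Real.Gamma_add_one hxn.ne']
    rw [h1]
    calc (x + n) * Real.Gamma (x + n) ≤ (x + n) * (Real.Gamma x * (x + n) ^ n) := by
          apply mul_le_mul_of_nonneg_left ih hxn.le
      _ = Real.Gamma x * (x + n) ^ (n+1) := by ring
      _ ≤ Real.Gamma x * (x + (n+1:ℕ)) ^ (n+1) := by
          apply mul_le_mul_of_nonneg_left _ (Real.Gamma_pos_of_pos hx).le
          apply pow_le_pow_left₀ hxn.le
          push_cast; linarith

lemma Gamma_nat_lower (x : ℝ) (hx : 0 < x) (n : ℕ) :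
    Real.Gamma x * x ^ n ≤ Real.Gamma (x + n) := by
  induction n with
  | zero => simp
  | succ n ih =>
    have hxn : 0 < x + n := by positivity
    have h1 : Real.Gamma (x + (n+1:ℕ)) = (x + n) * Real.Gamma (x + n) := by
      push_cast
      rw [show x + ((n:ℝ)+1) = (x + n) + 1 by ring, Real.Gamma_add_one hxn.ne']
    rw [h1]
    calc Real.Gamma x * x ^ (n+1) = x * (Real.Gamma x * x ^ n) := by ring
      _ ≤ (x + n) * (Real.Gamma x * x ^ n) := by
          apply mul_le_mul_of_nonneg_right _ (by positivity)
          simp [Nat.cast_nonneg]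
      _ ≤ (x + n) * Real.Gamma (x + n) := mul_le_mul_of_nonneg_left ih hxn.le

lemma Gamma_ratio_upper {x Aa : ℝ} (hx : 0 < x) (hA : 0 ≤ Aa) :
    Real.Gamma (x + Aa) ≤ Real.Gamma x * (x + Aa) ^ Aa := by
  set n := ⌊Aa⌋₊ with hn
  set θ := Aa - n with hθ
  have h0 : 0 ≤ θ := by
    have := Nat.floor_le hA
    simp only [hθ]; linarith
  have h1 : θ ≤ 1 := by
    have := Nat.lt_floor_add_one Aa
    simp only [hθ]; linarith
  have hxn : 0 < x + n := by positivity
  have hnA : (n:ℝ) ≤ Aa := Nat.floor_le hA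
  have e1 : x + Aa = (x + n) + θ := by simp only [hθ]; ring
  calc Real.Gamma (x + Aa) = Real.Gamma ((x + n) + θ) := by rw [e1]
    _ ≤ Real.Gamma (x + n) * (x + n) ^ θ := Gamma_frac_upper hxn h0 h1
    _ ≤ (Real.Gamma x * (x + n) ^ n) * (x + n) ^ θ := by
        apply mul_le_mul_of_nonneg_right (Gamma_nat_upper x hx n)
          (Real.rpow_nonneg hxn.le θ)
    _ = Real.Gamma x * (x + n) ^ Aa := by
        rw [mul_assoc, ← Real.rpow_natCast (x + n) n, ← Real.rpow_add hxn]
        congr 2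
        simp only [hθ]; ring
    _ ≤ Real.Gamma x * (x + Aa) ^ Aa := by
        apply mul_le_mul_of_nonneg_left _ (Real.Gamma_pos_of_pos hx).le
        exact Real.rpow_le_rpow hxn.le (by linarith) hA

lemma Gamma_ratio_lower {x Bb : ℝ} (hx : 1 ≤ x) (hB : 0 ≤ Bb) :
    Real.Gamma x * x ^ Bb ≤ 2 * Real.Gamma (x + Bb) := by
  have hx' : 0 < x := lt_of_lt_of_le one_pos hx
  set n := ⌊Bb⌋₊ with hn
  set θ := Bb - n with hθ
  have h0 : 0 ≤ θ := by
    have := Nat.floor_le hB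
    simp only [hθ]; linarith
  have h1 : θ ≤ 1 := by
    have := Nat.lt_floor_add_one Bb
    simp only [hθ]; linarith
  have hxn : 1 ≤ x + n := by
    have : (0:ℝ) ≤ n := Nat.cast_nonneg n
    linarith
  have hxn' : 0 < x + n := by linarith
  have e1 : x + Bb = (x + n) + θ := by simp only [hθ]; ring
  have step1 : Real.Gamma (x + n) * (x + n) ^ θ ≤ 2 * Real.Gamma ((x + n) + θ) :=
    Gamma_frac_lower hxn h0 h1
  have step2 : (Real.Gamma x * x ^ n) * x ^ θ ≤ Real.Gamma (x + n) * (x + n) ^ θ :=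
    calc (Real.Gamma x * x ^ n) * x ^ θ ≤ Real.Gamma (x + n) * x ^ θ :=
          mul_le_mul_of_nonneg_right (Gamma_nat_lower x hx' n) (Real.rpow_nonneg hx'.le θ)
      _ ≤ Real.Gamma (x + n) * (x + n) ^ θ :=
          mul_le_mul_of_nonneg_left (Real.rpow_le_rpow hx'.le
            (by have : (0:ℝ) ≤ (n:ℝ) := Nat.cast_nonneg n; linarith : x ≤ x + n) h0)
            (Real.Gamma_pos_of_pos hxn').le
  have e2 : (Real.Gamma x * x ^ n) * x ^ θ = Real.Gamma x * x ^ Bb := by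
    rw [mul_assoc, ← Real.rpow_natCast x n, ← Real.rpow_add hx']
    congr 2
    simp only [hθ]; ring
  rw [← e2, e1]
  linarith [step1, step2]

lemma foxWright_summable (p q : ℕ) (α A : Fin p → ℝ) (β B : Fin q → ℝ)
    (B₁ : ℝ) (hα : ∀ i, 0 < α i) (hA : ∀ i, 0 ≤ A i) (hβ : ∀ j, 0 < β j)
    (hB : ∀ j, 0 ≤ B j) (hB₁ : 0 < B₁)
    (hε : 0 < 1 + (B₁ + ∑ j, B j) - ∑ i, A i) (z : ℝ) (hz : 0 < z)
    (b : ℝ) (hb : 0 < b) :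
    Summable (fun k : ℕ => (∏ i, Real.Gamma (α i + k * A i)) /
      (Real.Gamma (b + k * B₁) * ∏ j, Real.Gamma (β j + k * B j)) *
        z ^ k / (k.factorial : ℝ)) := by
  have hargα : ∀ (k : ℕ) i, 0 < α i + k * A i := fun k i => by
    have h1 := hα i; have h2 := hA i; have h3 : (0:ℝ) ≤ k := Nat.cast_nonneg k
    nlinarith
  have hargβ : ∀ (k : ℕ) j, 0 < β j + k * B j := fun k j => by
    have h1 := hβ j; have h2 := hB j; have h3 : (0:ℝ) ≤ k := Nat.cast_nonneg k
    nlinarith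
  have hargb : ∀ (k : ℕ), 0 < b + k * B₁ := fun k => by
    have h3 : (0:ℝ) ≤ k := Nat.cast_nonneg k
    nlinarith
  set N : ℕ → ℝ := fun k => ∏ i, Real.Gamma (α i + k * A i) with hN
  set G : ℕ → ℝ := fun k => Real.Gamma (b + k * B₁) with hG
  set P : ℕ → ℝ := fun k => ∏ j, Real.Gamma (β j + k * B j) with hP
  have hNpos : ∀ k, 0 < N k := fun k =>
    Finset.prod_pos fun i _ => Real.Gamma_pos_of_pos (hargα k i)
  have hGpos : ∀ k, 0 < G k := fun k => Real.Gamma_pos_of_pos (hargb k)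
  have hPpos : ∀ k, 0 < P k := fun k =>
    Finset.prod_pos fun j _ => Real.Gamma_pos_of_pos (hargβ k j)
  set U : ℕ → ℝ := fun k => ∏ i, (α i + k * A i + A i) ^ (A i) with hU
  set V : ℕ → ℝ := fun k => (b + k * B₁) ^ B₁ with hV
  set W : ℕ → ℝ := fun k => ∏ j, (β j + k * B j) ^ (B j) with hW
  set C₁ : ℝ := ∏ i, (α i + A i) ^ (A i) with hC₁
  set C₂ : ℝ := ∏ j, (B j / 2) ^ (B j) with hC₂
  set ε : ℝ := 1 + (B₁ + ∑ j, B j) - ∑ i, A i with hεdef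
  have hC₁pos : 0 < C₁ := Finset.prod_pos fun i _ => by
    have := hα i; have := hA i
    exact Real.rpow_pos_of_pos (by linarith) _
  have hC₂pos : 0 < C₂ := Finset.prod_pos fun j _ => by
    rcases eq_or_lt_of_le (hB j) with h | h
    · rw [← h]; norm_num
    · exact Real.rpow_pos_of_pos (by linarith) _
  set K : ℝ := z * C₁ * 2 ^ (q + 2) / ((B₁ / 2) ^ B₁ * C₂) with hK
  have hVWpos : 0 < (B₁ / 2) ^ B₁ := Real.rpow_pos_of_pos (by linarith) _
  have ev1 : ∀ᶠ k : ℕ in atTop, 1 ≤ k := eventually_ge_atTop 1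
  have evb : ∀ᶠ k : ℕ in atTop, 1 ≤ b + k * B₁ := by
    have : Tendsto (fun k : ℕ => b + k * B₁) atTop atTop := by
      apply tendsto_atTop_add_const_left
      exact Tendsto.atTop_mul_const hB₁ tendsto_natCast_atTop_atTop
    exact this.eventually_ge_atTop 1
  have evβ : ∀ᶠ k : ℕ in atTop, ∀ j, B j ≠ 0 → 1 ≤ β j + k * B j := by
    rw [eventually_all]
    intro j
    by_cases hj : B j = 0
    · exact Eventually.of_forall fun k h => absurd hj h
    · have hj' : 0 < B j := lt_of_le_of_ne (hB j) (Ne.symm hj)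
      have : Tendsto (fun k : ℕ => β j + k * B j) atTop atTop := by
        apply tendsto_atTop_add_const_left
        exact Tendsto.atTop_mul_const hj' tendsto_natCast_atTop_atTop
      filter_upwards [this.eventually_ge_atTop 1] with k hk
      exact fun _ => hk
  have evK : ∀ᶠ k : ℕ in atTop, K ≤ ((k : ℝ) + 1) ^ ε := by
    have : Tendsto (fun k : ℕ => ((k : ℝ) + 1) ^ ε) atTop atTop :=
      (tendsto_rpow_atTop hε).comp
        (tendsto_atTop_add_const_right atTop 1 tendsto_natCast_atTop_atTop)
    exact this.eventually_ge_atTop K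
  apply summable_of_ratio_norm_eventually_le (r := 1/2) (by norm_num)
  filter_upwards [ev1, evb, evβ, evK] with k hk1 hkb hkβ hkK
  have hfactpos : ∀ m : ℕ, (0:ℝ) < m.factorial := fun m => by
    exact_mod_cast m.factorial_pos
  have hfpos : ∀ m : ℕ, 0 < N m / (G m * P m) * z ^ m / (m.factorial : ℝ) := fun m =>
    div_pos (mul_pos (div_pos (hNpos m) (mul_pos (hGpos m) (hPpos m))) (pow_pos hz m))
      (hfactpos m)
  have cast1 : ∀ (x y : ℝ), x + ((k:ℕ)+1:ℕ) * y = (x + k * y) + y := by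
    intro x y; push_cast; ring
  have hUnn : 0 ≤ U k := Finset.prod_nonneg fun i _ =>
    Real.rpow_nonneg (by have := hargα k i; have := hA i; linarith) _
  have hWnn : 0 ≤ W k := Finset.prod_nonneg fun j _ =>
    Real.rpow_nonneg (hargβ k j).le _
  have hVnn : 0 ≤ V k := Real.rpow_nonneg (hargb k).le _
  -- h1 : N (k+1) ≤ N k * U k
  have h1 : N (k+1) ≤ N k * U k := by
    show (∏ i, Real.Gamma (α i + ((k:ℕ)+1:ℕ) * A i))
        ≤ (∏ i, Real.Gamma (α i + k * A i)) * ∏ i, (α i + k * A i + A i) ^ (A i)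
    rw [← Finset.prod_mul_distrib]
    apply Finset.prod_le_prod (fun i _ => (Real.Gamma_pos_of_pos (hargα (k+1) i)).le)
    intro i _
    rw [cast1 (α i) (A i)]
    exact Gamma_ratio_upper (hargα k i) (hA i)
  -- h2 : G k * V k ≤ 2 * G (k+1)
  have h2 : G k * V k ≤ 2 * G (k+1) := by
    show Real.Gamma (b + k * B₁) * (b + k * B₁) ^ B₁
        ≤ 2 * Real.Gamma (b + ((k:ℕ)+1:ℕ) * B₁)
    rw [cast1 b B₁]
    exact Gamma_ratio_lower hkb (le_of_lt hB₁)
  -- h3 : P k * W k ≤ 2^q * P (k+1)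
  have h3 : P k * W k ≤ 2^q * P (k+1) := by
    show (∏ j, Real.Gamma (β j + k * B j)) * ∏ j, (β j + k * B j) ^ (B j)
        ≤ 2^q * ∏ j, Real.Gamma (β j + ((k:ℕ)+1:ℕ) * B j)
    rw [← Finset.prod_mul_distrib]
    have e : (2:ℝ)^q * ∏ j, Real.Gamma (β j + ((k:ℕ)+1:ℕ) * B j)
        = ∏ j : Fin q, 2 * Real.Gamma (β j + ((k:ℕ)+1:ℕ) * B j) := by
      rw [Finset.prod_mul_distrib, Finset.prod_const]
      simp
    rw [e]
    apply Finset.prod_le_prod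
    · intro j _
      exact mul_nonneg (Real.Gamma_pos_of_pos (hargβ k j)).le
        (Real.rpow_nonneg (hargβ k j).le _)
    · intro j _
      rw [cast1 (β j) (B j)]
      by_cases hj : B j = 0
      · simp only [hj, Real.rpow_zero, mul_one, add_zero]
        have := Real.Gamma_pos_of_pos (hargβ k j)
        simp only [hj, mul_zero, add_zero] at this ⊢
        linarith
      · exact Gamma_ratio_lower (hkβ j hj) (hB j)
  have hk1' : (1:ℝ) ≤ (k:ℝ) := by exact_mod_cast hk1
  have hkpos : (0:ℝ) < (k:ℝ) + 1 := by linarith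
  -- h4 : z * U k * 2^(q+2) ≤ V k * W k * (k+1)
  have h4 : z * U k * 2^(q+2) ≤ V k * W k * ((k:ℝ)+1) := by
    have hUb : U k ≤ C₁ * ((k:ℝ)+1) ^ (∑ i, A i) := by
      show (∏ i, (α i + k * A i + A i) ^ (A i))
          ≤ (∏ i, (α i + A i) ^ (A i)) * ((k:ℝ)+1) ^ (∑ i, A i)
      rw [Real.rpow_sum_of_pos hkpos, ← Finset.prod_mul_distrib]
      apply Finset.prod_le_prod
      · intro i _
        exact Real.rpow_nonneg (by have := hargα k i; have := hA i; linarith) _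
      · intro i _
        rw [← Real.mul_rpow (by have := hα i; have := hA i; linarith) hkpos.le]
        apply Real.rpow_le_rpow (by have := hargα k i; have := hA i; linarith) _ (hA i)
        have h5 := hα i; have h6 := hA i
        nlinarith
    have hVb : (B₁/2) ^ B₁ * ((k:ℝ)+1) ^ B₁ ≤ V k := by
      show (B₁/2) ^ B₁ * ((k:ℝ)+1) ^ B₁ ≤ (b + k * B₁) ^ B₁
      rw [← Real.mul_rpow (by linarith) hkpos.le]
      apply Real.rpow_le_rpow (by positivity) _ hB₁.le
      nlinarith
    have hWb : C₂ * ((k:ℝ)+1) ^ (∑ j, B j) ≤ W k := by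
      show (∏ j, (B j / 2) ^ (B j)) * ((k:ℝ)+1) ^ (∑ j, B j)
          ≤ ∏ j, (β j + k * B j) ^ (B j)
      rw [Real.rpow_sum_of_pos hkpos, ← Finset.prod_mul_distrib]
      apply Finset.prod_le_prod
      · intro j _
        exact mul_nonneg (Real.rpow_nonneg (by have := hB j; linarith) _)
          (Real.rpow_nonneg hkpos.le _)
      · intro j _
        rw [← Real.mul_rpow (by have := hB j; linarith) hkpos.le]
        apply Real.rpow_le_rpow (by have := hB j; positivity) _ (hB j)
        have h5 := hβ j; have h6 := hB j
        nlinarith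
    have hrpow_split : ((k:ℝ)+1) ^ B₁ * ((k:ℝ)+1) ^ (∑ j, B j) * ((k:ℝ)+1)
        = ((k:ℝ)+1) ^ (∑ i, A i) * ((k:ℝ)+1) ^ ε := by
      nth_rewrite 3 [← Real.rpow_one ((k:ℝ)+1)]
      rw [← Real.rpow_add hkpos, ← Real.rpow_add hkpos, ← Real.rpow_add hkpos]
      congr 1
      rw [hεdef]; ring
    have hKK : z * C₁ * 2^(q+2) ≤ (B₁/2) ^ B₁ * C₂ * ((k:ℝ)+1) ^ ε := by
      rw [hK, div_le_iff₀ (by positivity)] at hkK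
      calc z * C₁ * 2^(q+2) ≤ ((k:ℝ)+1) ^ ε * ((B₁/2) ^ B₁ * C₂) := hkK
        _ = (B₁/2) ^ B₁ * C₂ * ((k:ℝ)+1) ^ ε := by ring
    calc z * U k * 2^(q+2)
        ≤ z * (C₁ * ((k:ℝ)+1) ^ (∑ i, A i)) * 2^(q+2) :=
          mul_le_mul_of_nonneg_right (mul_le_mul_of_nonneg_left hUb hz.le)
            (by positivity)
      _ = (z * C₁ * 2^(q+2)) * ((k:ℝ)+1) ^ (∑ i, A i) := by ring
      _ ≤ ((B₁/2) ^ B₁ * C₂ * ((k:ℝ)+1) ^ ε) * ((k:ℝ)+1) ^ (∑ i, A i) :=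
          mul_le_mul_of_nonneg_right hKK (Real.rpow_nonneg hkpos.le _)
      _ ≤ V k * W k * ((k:ℝ)+1) := by
          have expand : ((B₁/2) ^ B₁ * C₂ * ((k:ℝ)+1) ^ ε) * ((k:ℝ)+1) ^ (∑ i, A i)
              = ((B₁/2) ^ B₁ * ((k:ℝ)+1) ^ B₁) * (C₂ * ((k:ℝ)+1) ^ (∑ j, B j)) * ((k:ℝ)+1) := by
            rw [show ((B₁/2) ^ B₁ * ((k:ℝ)+1) ^ B₁) * (C₂ * ((k:ℝ)+1) ^ (∑ j, B j)) * ((k:ℝ)+1)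
              = ((B₁/2) ^ B₁ * C₂) * (((k:ℝ)+1) ^ B₁ * ((k:ℝ)+1) ^ (∑ j, B j) * ((k:ℝ)+1))
              from by ring, hrpow_split]
            ring
          rw [expand]
          exact mul_le_mul_of_nonneg_right (mul_le_mul hVb hWb
            (mul_nonneg hC₂pos.le (Real.rpow_nonneg hkpos.le _)) hVnn) hkpos.le
  -- assemble
  have repr : ∀ m : ℕ, N m / (G m * P m) * z ^ m / (m.factorial : ℝ)
      = (N m * z ^ m) / (G m * P m * (m.factorial : ℝ)) := fun m => by
    field_simp
  have hnorm : ∀ m : ℕ, ‖N m / (G m * P m) * z ^ m / (m.factorial : ℝ)‖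
      = N m / (G m * P m) * z ^ m / (m.factorial : ℝ) := fun m =>
    Real.norm_of_nonneg (hfpos m).le
  show ‖N (k+1) / (G (k+1) * P (k+1)) * z ^ (k+1) / (((k+1).factorial : ℕ) : ℝ)‖
      ≤ 1/2 * ‖N k / (G k * P k) * z ^ k / ((k.factorial : ℕ) : ℝ)‖
  rw [hnorm, hnorm, repr, repr, ← mul_div_assoc]
  rw [div_le_div_iff₀ (mul_pos (mul_pos (hGpos (k+1)) (hPpos (k+1))) (hfactpos (k+1)))
    (mul_pos (mul_pos (hGpos k) (hPpos k)) (hfactpos k))]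
  have hfact : (((k+1).factorial : ℕ) : ℝ) = ((k:ℝ)+1) * (k.factorial : ℝ) := by
    rw [Nat.factorial_succ]; push_cast; ring
  calc N (k+1) * z ^ (k+1) * (G k * P k * (k.factorial : ℝ))
      ≤ (N k * U k) * z ^ (k+1) * (G k * P k * (k.factorial : ℝ)) :=
        mul_le_mul_of_nonneg_right (mul_le_mul_of_nonneg_right h1 (by positivity))
          (mul_nonneg (mul_nonneg (hGpos k).le (hPpos k).le) (hfactpos k).le)
    _ = (N k * z^k * G k * P k * (k.factorial : ℝ)) * (z * U k) := by ring
    _ ≤ (N k * z^k * G k * P k * (k.factorial : ℝ))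
          * (V k * W k * ((k:ℝ)+1) * ((2:ℝ)^(q+2))⁻¹) := by
        apply mul_le_mul_of_nonneg_left
        · rw [← div_eq_mul_inv, le_div_iff₀ (by positivity)]
          exact h4
        · have := hNpos k; have := hGpos k; have := hPpos k; have := hfactpos k
          positivity
    _ = (N k * z^k * (k.factorial : ℝ) * ((k:ℝ)+1)) * ((G k * V k) * (P k * W k))
          * ((2:ℝ)^(q+2))⁻¹ := by ring
    _ ≤ (N k * z^k * (k.factorial : ℝ) * ((k:ℝ)+1)) * ((2 * G (k+1)) * (2^q * P (k+1)))
          * ((2:ℝ)^(q+2))⁻¹ := by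
        apply mul_le_mul_of_nonneg_right _ (by positivity)
        apply mul_le_mul_of_nonneg_left
        · exact mul_le_mul h2 h3 (mul_nonneg (hPpos k).le hWnn)
            (by have := hGpos (k+1); positivity)
        · have := hNpos k; have := hfactpos k
          positivity
    _ = 1/2 * (N k * z ^ k) * (G (k+1) * P (k+1) * (((k+1).factorial : ℕ) : ℝ)) := by
        rw [hfact]
        have e2 : (2:ℝ)^(q+2) = 2^q * 4 := by rw [pow_add]; norm_num
        rw [e2, mul_inv]
        have h2q : ((2:ℝ)^q) ≠ 0 := by positivity
        field_simp
        ring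

theorem foxWright_logConvex_in_beta1 (p q : ℕ) (α A : Fin p → ℝ) (β B : Fin q → ℝ)
    (B₁ : ℝ) (hα : ∀ i, 0 < α i) (hA : ∀ i, 0 ≤ A i) (hβ : ∀ j, 0 < β j)
    (hB : ∀ j, 0 ≤ B j) (hB₁ : 0 < B₁)
    (hε : 0 < 1 + (B₁ + ∑ j, B j) - ∑ i, A i) (z : ℝ) (hz : 0 < z) :
    ConvexOn ℝ (Set.Ioi 0) (fun b₁ : ℝ =>
      Real.log (Real.Gamma b₁ *
        ∑' k : ℕ, (∏ i, Real.Gamma (α i + k * A i)) /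
          (Real.Gamma (b₁ + k * B₁) * ∏ j, Real.Gamma (β j + k * B j)) *
            z ^ k / (k.factorial : ℝ))) := by
  have hargα : ∀ (k : ℕ) i, 0 < α i + k * A i := fun k i => by
    have h1 := hα i; have h2 := hA i; have h3 : (0:ℝ) ≤ k := Nat.cast_nonneg k
    nlinarith
  have hargβ : ∀ (k : ℕ) j, 0 < β j + k * B j := fun k j => by
    have h1 := hβ j; have h2 := hB j; have h3 : (0:ℝ) ≤ k := Nat.cast_nonneg k
    nlinarith
  have hargw : ∀ (w : ℝ), 0 < w → ∀ (k : ℕ), 0 < w + k * B₁ := fun w hw k => by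
    have h3 : (0:ℝ) ≤ k := Nat.cast_nonneg k
    nlinarith
  set f : ℝ → ℕ → ℝ := fun w k => (∏ i, Real.Gamma (α i + k * A i)) /
      (Real.Gamma (w + k * B₁) * ∏ j, Real.Gamma (β j + k * B j)) *
        z ^ k / (k.factorial : ℝ) with hf
  have hfpos : ∀ (w : ℝ), 0 < w → ∀ (k : ℕ), 0 < f w k := by
    intro w hw k
    have h1 : 0 < ∏ i, Real.Gamma (α i + k * A i) :=
      Finset.prod_pos fun i _ => Real.Gamma_pos_of_pos (hargα k i)
    have h2 : 0 < Real.Gamma (w + k * B₁) := Real.Gamma_pos_of_pos (hargw w hw k)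
    have h3 : 0 < ∏ j, Real.Gamma (β j + k * B j) :=
      Finset.prod_pos fun j _ => Real.Gamma_pos_of_pos (hargβ k j)
    have h4 : (0:ℝ) < k.factorial := by exact_mod_cast k.factorial_pos
    rw [hf]
    positivity
  have hsum : ∀ (w : ℝ), 0 < w → Summable (f w) := fun w hw =>
    foxWright_summable p q α A β B B₁ hα hA hβ hB hB₁ hε z hz w hw
  have hgsum : ∀ (w : ℝ), 0 < w → Summable (fun k => Real.Gamma w * f w k) := fun w hw =>
    (hsum w hw).mul_left _
  have hT : ∀ (w : ℝ), Real.Gamma w * ∑' k, f w k = ∑' k, Real.Gamma w * f w k :=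
    fun w => (tsum_mul_left).symm
  have hTpos : ∀ (w : ℝ), 0 < w → 0 < Real.Gamma w * ∑' k, f w k := by
    intro w hw
    rw [hT w]
    exact Summable.tsum_pos (hgsum w hw) (fun k => (mul_pos (Real.Gamma_pos_of_pos hw)
      (hfpos w hw k)).le) 0 (mul_pos (Real.Gamma_pos_of_pos hw) (hfpos w hw 0))
  constructor
  · exact convex_Ioi 0
  intro u hu v hv s t hs ht hst
  have hu' : (0:ℝ) < u := hu
  have hv' : (0:ℝ) < v := hv
  have hb' : (0:ℝ) < s • u + t • v := by
    simp only [smul_eq_mul]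
    rcases lt_or_eq_of_le hs with h | h
    · have : 0 ≤ t * v := mul_nonneg ht hv'.le
      nlinarith
    · have hts : t = 1 := by linarith
      rw [← h, hts]; simpa using hv'
  set b := s • u + t • v with hbdef
  show Real.log (Real.Gamma b * ∑' k, f b k)
      ≤ s • Real.log (Real.Gamma u * ∑' k, f u k) + t • Real.log (Real.Gamma v * ∑' k, f v k)
  simp only [smul_eq_mul]
  set Tu := Real.Gamma u * ∑' k, f u k with hTu
  set Tv := Real.Gamma v * ∑' k, f v k with hTv
  set Tb := Real.Gamma b * ∑' k, f b k with hTbdef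
  have hTupos : 0 < Tu := hTpos u hu'
  have hTvpos : 0 < Tv := hTpos v hv'
  have hTbpos : 0 < Tb := hTpos b hb'
  -- termwise log-convexity
  have hterm : ∀ k : ℕ, Real.Gamma b * f b k
      ≤ (Real.Gamma u * f u k) ^ s * (Real.Gamma v * f v k) ^ t := by
    intro k
    have ha : (0:ℝ) ≤ (k : ℝ) * B₁ := mul_nonneg (Nat.cast_nonneg k) hB₁.le
    have hcvx := (convexOn_log_Gamma_sub ((k:ℝ) * B₁) ha).2 hu hv hs ht hst
    simp only [smul_eq_mul] at hcvx
    set D : ℝ := (∏ i, Real.Gamma (α i + k * A i)) /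
      (∏ j, Real.Gamma (β j + k * B j)) * z ^ k / (k.factorial : ℝ) with hD
    have hDpos : 0 < D := by
      have h1 : 0 < ∏ i, Real.Gamma (α i + k * A i) :=
        Finset.prod_pos fun i _ => Real.Gamma_pos_of_pos (hargα k i)
      have h3 : 0 < ∏ j, Real.Gamma (β j + k * B j) :=
        Finset.prod_pos fun j _ => Real.Gamma_pos_of_pos (hargβ k j)
      have h4 : (0:ℝ) < k.factorial := by exact_mod_cast k.factorial_pos
      rw [hD]; positivity
    have hrepr : ∀ (w : ℝ), 0 < w → Real.Gamma w * f w k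
        = Real.exp (Real.log (Real.Gamma w) - Real.log (Real.Gamma (w + k * B₁))) * D := by
      intro w hw
      have hΓw : 0 < Real.Gamma w := Real.Gamma_pos_of_pos hw
      have hΓwk : 0 < Real.Gamma (w + k * B₁) := Real.Gamma_pos_of_pos (hargw w hw k)
      have h3 : 0 < ∏ j, Real.Gamma (β j + k * B j) :=
        Finset.prod_pos fun j _ => Real.Gamma_pos_of_pos (hargβ k j)
      have h1 : 0 < ∏ i, Real.Gamma (α i + k * A i) :=
        Finset.prod_pos fun i _ => Real.Gamma_pos_of_pos (hargα k i)
      have h4 : (0:ℝ) < k.factorial := by exact_mod_cast k.factorial_pos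
      rw [Real.exp_sub, Real.exp_log hΓw, Real.exp_log hΓwk, hf, hD]
      beta_reduce
      set NN := ∏ i, Real.Gamma (α i + (k:ℝ) * A i)
      set PP := ∏ j, Real.Gamma (β j + (k:ℝ) * B j)
      field_simp
    rw [hrepr b hb', hrepr u hu', hrepr v hv']
    set Lu := Real.log (Real.Gamma u) - Real.log (Real.Gamma (u + k * B₁)) with hLu
    set Lv := Real.log (Real.Gamma v) - Real.log (Real.Gamma (v + k * B₁)) with hLv
    have e : Real.exp (s * Lu + t * Lv) * D
        = (Real.exp Lu * D) ^ s * (Real.exp Lv * D) ^ t := by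
      have eDu : Real.exp Lu * D = Real.exp (Lu + Real.log D) := by
        rw [Real.exp_add, Real.exp_log hDpos]
      have eDv : Real.exp Lv * D = Real.exp (Lv + Real.log D) := by
        rw [Real.exp_add, Real.exp_log hDpos]
      conv_rhs => rw [eDu, eDv, ← Real.exp_mul, ← Real.exp_mul, ← Real.exp_add]
      rw [show (Lu + Real.log D) * s + (Lv + Real.log D) * t
          = s * Lu + t * Lv + (s + t) * Real.log D from by ring,
        hst, one_mul, Real.exp_add (s * Lu + t * Lv) (Real.log D), Real.exp_log hDpos]
    rw [← e]
    apply mul_le_mul_of_nonneg_right _ hDpos.le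
    exact Real.exp_le_exp.mpr hcvx
  -- sum the termwise bound
  have hgu : ∀ k : ℕ, 0 ≤ Real.Gamma u * f u k := fun k =>
    (mul_pos (Real.Gamma_pos_of_pos hu') (hfpos u hu' k)).le
  have hgv : ∀ k : ℕ, 0 ≤ Real.Gamma v * f v k := fun k =>
    (mul_pos (Real.Gamma_pos_of_pos hv') (hfpos v hv' k)).le
  have hle : ∀ k : ℕ, Real.Gamma b * f b k
      ≤ Tu ^ s * Tv ^ t * (s / Tu * (Real.Gamma u * f u k) + t / Tv * (Real.Gamma v * f v k)) := by
    intro k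
    have h2 : (Real.Gamma u * f u k) ^ s * (Real.Gamma v * f v k) ^ t
        = Tu ^ s * Tv ^ t * (((Real.Gamma u * f u k) / Tu) ^ s
            * ((Real.Gamma v * f v k) / Tv) ^ t) := by
      rw [Real.div_rpow (hgu k) hTupos.le, Real.div_rpow (hgv k) hTvpos.le]
      have hTus : (0:ℝ) < Tu ^ s := Real.rpow_pos_of_pos hTupos _
      have hTvt : (0:ℝ) < Tv ^ t := Real.rpow_pos_of_pos hTvpos _
      field_simp
    have h3 := Real.geom_mean_le_arith_mean2_weighted hs ht
      (div_nonneg (hgu k) hTupos.le) (div_nonneg (hgv k) hTvpos.le) hst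
    calc Real.Gamma b * f b k
        ≤ (Real.Gamma u * f u k) ^ s * (Real.Gamma v * f v k) ^ t := hterm k
      _ = Tu ^ s * Tv ^ t * (((Real.Gamma u * f u k) / Tu) ^ s
            * ((Real.Gamma v * f v k) / Tv) ^ t) := h2
      _ ≤ Tu ^ s * Tv ^ t * (s * ((Real.Gamma u * f u k) / Tu)
            + t * ((Real.Gamma v * f v k) / Tv)) := by
          apply mul_le_mul_of_nonneg_left h3
          positivity
      _ = Tu ^ s * Tv ^ t * (s / Tu * (Real.Gamma u * f u k)
            + t / Tv * (Real.Gamma v * f v k)) := by ring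
  have hsum_rhs : Summable (fun k => Tu ^ s * Tv ^ t * (s / Tu * (Real.Gamma u * f u k)
      + t / Tv * (Real.Gamma v * f v k))) :=
    (((hgsum u hu').mul_left (s / Tu)).add ((hgsum v hv').mul_left (t / Tv))).mul_left _
  have hTb_le : Tb ≤ Tu ^ s * Tv ^ t := by
    rw [hTbdef, hT b]
    calc ∑' k, Real.Gamma b * f b k
        ≤ ∑' k, Tu ^ s * Tv ^ t * (s / Tu * (Real.Gamma u * f u k)
            + t / Tv * (Real.Gamma v * f v k)) :=
          Summable.tsum_le_tsum hle (hgsum b hb') hsum_rhs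
      _ = Tu ^ s * Tv ^ t * (s / Tu * (Real.Gamma u * ∑' k, f u k)
            + t / Tv * (Real.Gamma v * ∑' k, f v k)) := by
          rw [tsum_mul_left, Summable.tsum_add ((hgsum u hu').mul_left (s / Tu))
            ((hgsum v hv').mul_left (t / Tv)), tsum_mul_left, tsum_mul_left,
            tsum_mul_left, tsum_mul_left]
      _ = Tu ^ s * Tv ^ t * (s / Tu * Tu + t / Tv * Tv) := rfl
      _ = Tu ^ s * Tv ^ t := by
          rw [div_mul_cancel₀ _ hTupos.ne', div_mul_cancel₀ _ hTvpos.ne', hst, mul_one]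
  calc Real.log Tb ≤ Real.log (Tu ^ s * Tv ^ t) := Real.log_le_log hTbpos hTb_le
    _ = s * Real.log Tu + t * Real.log Tv := by
        rw [Real.log_mul (Real.rpow_pos_of_pos hTupos _).ne' (Real.rpow_pos_of_pos hTvpos _).ne',
          Real.log_rpow hTupos, Real.log_rpow hTvpos]
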